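/- Let h > 0 and let f : ℂ → ℂ be entire with |f(w)| ≤ C·exp(a·|w|) for all w ∈ ℂ, for some constants C, a ≥ 0. Then ∫_ℂ conj(w) · f(w) dγ_h(w) = 2h · f′(0), where γ_h is the Gaussian measure on ℂ whose real and imaginary parts are independent real Gaussians of mean 0 and variance h. -/

import Mathlib

open MeasureTheory ProbabilityTheory Complex

open Set
open scoped ENNReal NNReal

lemma aux_int_exp_abs {h : ℝ} (hh : 0 < h) (b : ℝ) :
    Integrable (fun x : ℝ => Real.exp (b * |x| - x ^ 2 / (2 * h))) := by
  have hcont : Continuous fun x : ℝ => Real.exp (b * |x| - x ^ 2 / (2 * h)) := by fun_prop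
  refine ((integrable_exp_neg_mul_sq (show (0:ℝ) < (4*h)⁻¹ by positivity)).const_mul
      (Real.exp (b ^ 2 * h))).mono' hcont.aestronglyMeasurable ?_
  filter_upwards with x
  rw [Real.norm_eq_abs, _root_.abs_of_nonneg (Real.exp_nonneg _), ← Real.exp_add]
  apply Real.exp_le_exp.mpr
  have h1 : 0 ≤ (|x| - 2*b*h)^2 := sq_nonneg _
  have h2 : |x|^2 = x^2 := sq_abs x
  have h3 : 0 < 4*h := by linarith
  rw [sub_le_iff_le_add]
  have h4 : b ^ 2 * h + -(4 * h)⁻¹ * x ^ 2 + x ^ 2 / (2 * h) = b^2*h + x^2/(4*h) := by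
    field_simp; ring
  rw [h4, ← mul_le_mul_iff_of_pos_right h3]
  have h5 : (b^2*h + x^2/(4*h)) * (4*h) = 4*b^2*h^2 + x^2 := by field_simp
  rw [h5]; nlinarith [h1, h2]

lemma aux_phi_eq {h : ℝ} (hh : 0 < h) (x : ℝ) :
    gaussianPDFReal 0 h.toNNReal x
      = (Real.sqrt (2 * Real.pi * h))⁻¹ * Real.exp (-x ^ 2 / (2 * h)) := by
  simp [gaussianPDFReal, Real.coe_toNNReal h hh.le]

lemma aux_phi_cont {h : ℝ} : Continuous (gaussianPDFReal 0 h.toNNReal) := by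
  rw [gaussianPDFReal_def]; fun_prop

lemma aux_rho_int {h : ℝ} (hh : 0 < h) (b : ℝ) :
    Integrable (fun x : ℝ => Real.exp (b * |x|) * gaussianPDFReal 0 h.toNNReal x) := by
  have : (fun x : ℝ => Real.exp (b * |x|) * gaussianPDFReal 0 h.toNNReal x)
      = fun x : ℝ => (Real.sqrt (2 * Real.pi * h))⁻¹ * Real.exp (b * |x| - x ^ 2 / (2 * h)) := by
    funext x
    rw [aux_phi_eq hh, sub_eq_add_neg, Real.exp_add, neg_div]
    ring
  rw [this]
  exact (aux_int_exp_abs hh b).const_mul _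

lemma aux_var_ne {h : ℝ} (hh : 0 < h) : h.toNNReal ≠ 0 := by
  simp only [ne_eq, Real.toNNReal_eq_zero, not_le]; exact hh

lemma aux_gauss_eq {h : ℝ} (hh : 0 < h) :
    gaussianReal 0 h.toNNReal
      = volume.withDensity (fun x => ((gaussianPDFReal 0 h.toNNReal x).toNNReal : ℝ≥0∞)) := by
  rw [gaussianReal_of_var_ne_zero _ (aux_var_ne hh)]; rfl

lemma aux_exp_gauss_int {h : ℝ} (hh : 0 < h) (b : ℝ) :
    Integrable (fun x : ℝ => Real.exp (b * |x|)) (gaussianReal 0 h.toNNReal) := by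
  rw [aux_gauss_eq hh]
  have hmeas : Measurable fun x : ℝ => (gaussianPDFReal 0 h.toNNReal x).toNNReal :=
    (measurable_gaussianPDFReal _ _).real_toNNReal
  refine (integrable_withDensity_iff_integrable_smul hmeas).mpr ?_
  have : (fun x : ℝ => (gaussianPDFReal 0 h.toNNReal x).toNNReal • Real.exp (b * |x|))
      = fun x : ℝ => Real.exp (b * |x|) * gaussianPDFReal 0 h.toNNReal x := by
    funext x
    simp [NNReal.smul_def, Real.coe_toNNReal _ (gaussianPDFReal_nonneg _ _ _), mul_comm]
  rw [this]
  exact aux_rho_int hh b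

/-- The Gaussian measure on `ℂ` whose real and imaginary parts are independent
real Gaussians of mean `0` and variance `t`. -/
noncomputable def gaussC (t : ℝ) : Measure ℂ :=
  ((gaussianReal 0 t.toNNReal).prod (gaussianReal 0 t.toNNReal)).map
    (fun p => (p.1 : ℂ) + (p.2 : ℂ) * Complex.I)

section main
variable {h : ℝ} {f : ℂ → ℂ} {C a : ℝ}


lemma aux_gg_growth (hC : 0 ≤ C) (ha : 0 ≤ a)
    (hgrowth : ∀ w, ‖f w‖ ≤ C * Real.exp (a * ‖w‖)) (w : ℂ) :
    ‖(starRingEnd ℂ) w * f w‖ ≤ C * Real.exp ((a + 1) * ‖w‖) := by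
  have h1 : ‖(starRingEnd ℂ) w * f w‖ = ‖w‖ * ‖f w‖ := by
    simp [map_mul]
  rw [h1]
  have h2 : ‖w‖ ≤ Real.exp (‖w‖) := by
    have := Real.add_one_le_exp (‖w‖); linarith
  calc ‖w‖ * ‖f w‖
      ≤ Real.exp (‖w‖) * (C * Real.exp (a * ‖w‖)) :=
        mul_le_mul h2 (hgrowth w) (norm_nonneg _) (Real.exp_nonneg _)
    _ = C * Real.exp ((a + 1) * ‖w‖) := by
        rw [show (a+1) * ‖w‖ = ‖w‖ + a * ‖w‖ by ring,
          Real.exp_add]; ring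

lemma aux_abs_le (p : ℝ × ℝ) : ‖(p.1 : ℂ) + (p.2 : ℂ) * Complex.I‖ ≤ |p.1| + |p.2| := by
  refine le_trans (norm_add_le _ _) ?_
  simp

lemma aux_gg_int_prod (hh : 0 < h) (hf : ∀ z, AnalyticAt ℂ f z) (hC : 0 ≤ C) (ha : 0 ≤ a)
    (hgrowth : ∀ w, ‖f w‖ ≤ C * Real.exp (a * ‖w‖)) :
    Integrable (fun p : ℝ × ℝ => (starRingEnd ℂ) ((p.1 : ℂ) + (p.2 : ℂ) * Complex.I)
        * f ((p.1 : ℂ) + (p.2 : ℂ) * Complex.I))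
      ((gaussianReal 0 h.toNNReal).prod (gaussianReal 0 h.toNNReal)) := by
  have hfc : Continuous f := continuous_iff_continuousAt.mpr fun z => (hf z).continuousAt
  have hb : (0:ℝ) ≤ a + 1 := by linarith
  refine (((aux_exp_gauss_int hh (a+1)).const_mul C).mul_prod
      (aux_exp_gauss_int hh (a+1))).mono' ?_ ?_
  · have hgc : Continuous fun w : ℂ => (starRingEnd ℂ) w * f w := continuous_conj.mul hfc
    exact (hgc.comp (by fun_prop : Continuous fun p : ℝ × ℝ =>
      (p.1 : ℂ) + (p.2 : ℂ) * Complex.I)).aestronglyMeasurable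
  · filter_upwards with p
    calc ‖(starRingEnd ℂ) ((p.1 : ℂ) + (p.2 : ℂ) * Complex.I)
          * f ((p.1 : ℂ) + (p.2 : ℂ) * Complex.I)‖
        ≤ C * Real.exp ((a+1) * ‖(p.1 : ℂ) + (p.2 : ℂ) * Complex.I‖) :=
          aux_gg_growth hC ha hgrowth _
      _ ≤ C * Real.exp ((a+1) * (|p.1| + |p.2|)) := by
          refine mul_le_mul_of_nonneg_left (Real.exp_le_exp.mpr ?_) hC
          exact mul_le_mul_of_nonneg_left (aux_abs_le p) hb
      _ = C * Real.exp ((a+1) * |p.1|) * Real.exp ((a+1) * |p.2|) := by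
          rw [mul_assoc, ← Real.exp_add]; ring_nf


lemma aux_transfer (hh : 0 < h) (g : ℂ → ℂ) (hgc : Continuous g)
    (hint : Integrable (fun p : ℝ × ℝ => g ((p.1 : ℂ) + (p.2 : ℂ) * Complex.I))
      ((gaussianReal 0 h.toNNReal).prod (gaussianReal 0 h.toNNReal)))
    (hint2 : Integrable (fun p : ℝ × ℝ =>
        (gaussianPDFReal 0 h.toNNReal p.1 * gaussianPDFReal 0 h.toNNReal p.2)
          • g ((p.1 : ℂ) + (p.2 : ℂ) * Complex.I)) (volume.prod volume)) :
    ∫ w, g w ∂(gaussC h)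
      = ∫ z : ℂ, (gaussianPDFReal 0 h.toNNReal z.re * gaussianPDFReal 0 h.toNNReal z.im) • g z := by
  have hmeas : Measurable fun x : ℝ => (gaussianPDFReal 0 h.toNNReal x).toNNReal :=
    (measurable_gaussianPDFReal _ _).real_toNNReal
  have hγ := aux_gauss_eq hh
  rw [gaussC, integral_map (by fun_prop : Measurable fun p : ℝ × ℝ =>
      (p.1 : ℂ) + (p.2 : ℂ) * Complex.I).aemeasurable hgc.aestronglyMeasurable,
    integral_prod _ hint]
  have inner : ∀ x : ℝ, (∫ y, g ((x : ℂ) + (y : ℂ) * Complex.I) ∂(gaussianReal 0 h.toNNReal))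
      = ∫ y, gaussianPDFReal 0 h.toNNReal y • g ((x : ℂ) + (y : ℂ) * Complex.I) := by
    intro x
    rw [hγ, integral_withDensity_eq_integral_smul hmeas]
    congr 1; funext y
    rw [NNReal.smul_def, Real.coe_toNNReal _ (gaussianPDFReal_nonneg _ _ _)]
  simp_rw [inner]
  rw [hγ, integral_withDensity_eq_integral_smul hmeas]
  have outer : (fun x : ℝ => (gaussianPDFReal 0 h.toNNReal x).toNNReal
        • ∫ y, gaussianPDFReal 0 h.toNNReal y • g ((x : ℂ) + (y : ℂ) * Complex.I))
      = fun x : ℝ => ∫ y, (gaussianPDFReal 0 h.toNNReal x * gaussianPDFReal 0 h.toNNReal y)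
        • g ((x : ℂ) + (y : ℂ) * Complex.I) := by
    funext x
    rw [NNReal.smul_def, Real.coe_toNNReal _ (gaussianPDFReal_nonneg _ _ _), ← integral_smul]
    congr 1; funext y; rw [smul_smul]
  rw [outer, integral_integral hint2, ← Measure.volume_eq_prod,
    ← Complex.volume_preserving_equiv_real_prod.integral_comp
      Complex.measurableEquivRealProd.measurableEmbedding]
  congr 1; funext z
  simp only [Complex.measurableEquivRealProd_apply, Complex.re_add_im]


lemma aux_circle (hfd : Differentiable ℂ f) {r : ℝ} (hr : 0 < r) :
    ∫ θ in Ioo (-Real.pi) Real.pi,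
        (starRingEnd ℂ) (circleMap 0 r θ) * f (circleMap 0 r θ)
      = (2 * Real.pi * r ^ 2 : ℝ) • deriv f 0 := by
  have hle : -Real.pi ≤ Real.pi := by linarith [Real.pi_pos]
  set G : ℝ → ℂ := fun θ => (starRingEnd ℂ) (circleMap 0 r θ) * f (circleMap 0 r θ) with hG
  have h1 : ∫ θ in Ioo (-Real.pi) Real.pi, G θ = ∫ θ in (-Real.pi)..Real.pi, G θ := by
    rw [intervalIntegral.integral_of_le hle, integral_Ioc_eq_integral_Ioo]
  have hper : Function.Periodic G (2 * Real.pi) := fun θ => by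
    simp only [hG, periodic_circleMap 0 r θ]
  have h2 : ∫ θ in (-Real.pi)..Real.pi, G θ = ∫ θ in (0:ℝ)..2 * Real.pi, G θ := by
    have := hper.intervalIntegral_add_eq (-Real.pi) 0
    rw [show -Real.pi + 2 * Real.pi = Real.pi by ring, zero_add] at this
    exact this
  have hd := DiffContOnCl.deriv_eq_smul_circleIntegral hr (hfd.diffContOnCl (s := Metric.ball 0 r))
  have h2pi : (2 * Real.pi * Complex.I : ℂ) ≠ 0 := by
    simp [Real.pi_ne_zero, Complex.I_ne_zero, Complex.ofReal_ne_zero]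
  have hcirc : (∮ z in C(0, r), (z - 0) ^ (-2 : ℤ) • f z) = (2 * Real.pi * Complex.I : ℂ) • deriv f 0 := by
    rw [← hd]; congr 1; funext z; simp only [zpow_neg, one_div, zpow_ofNat]
  have hpt : ∀ θ : ℝ, G θ = ((r:ℂ)^2 * (-Complex.I)) *
      (deriv (circleMap 0 r) θ • (((circleMap 0 r θ) - 0) ^ (-2 : ℤ) • f (circleMap 0 r θ))) := by
    intro θ
    set w := circleMap 0 r θ with hw
    have hwne : w ≠ 0 := circleMap_ne_center (ne_of_gt hr)
    have hconj : w * (starRingEnd ℂ) w = ((r:ℂ))^2 := by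
      rw [Complex.mul_conj, Complex.normSq_eq_norm_sq, norm_circleMap_zero, abs_of_pos hr]
      push_cast; ring
    rw [deriv_circleMap, smul_eq_mul, smul_eq_mul, sub_zero, ← hw]
    rw [show w ^ (-2 : ℤ) = (w^2)⁻¹ by rw [zpow_neg, zpow_two, sq]]
    rw [show ((r:ℂ)^2 * -Complex.I) * ((w * Complex.I) * ((w^2)⁻¹ * f w))
        = ((r:ℂ)^2 * (w^2)⁻¹ * (-Complex.I * Complex.I) * w) * f w from by ring,
      show -Complex.I * Complex.I = 1 from by rw [neg_mul, Complex.I_mul_I, neg_neg], ← hconj]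
    simp only [hG]
    congr 1
    field_simp [sq]
    rw [← hw]
  calc ∫ θ in Ioo (-Real.pi) Real.pi, G θ = ∫ θ in (0:ℝ)..2 * Real.pi, G θ := by rw [h1, h2]
    _ = ((r:ℂ)^2 * (-Complex.I)) * ∮ z in C(0, r), (z - 0) ^ (-2 : ℤ) • f z := by
        rw [show (∮ z in C(0, r), (z - 0) ^ (-2 : ℤ) • f z) = ∫ θ in (0:ℝ)..2 * Real.pi,
            deriv (circleMap 0 r) θ • (((circleMap 0 r θ) - 0) ^ (-2 : ℤ) • f (circleMap 0 r θ))
          from rfl, ← intervalIntegral.integral_const_mul]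
        exact intervalIntegral.integral_congr fun θ _ => hpt θ
    _ = (2 * Real.pi * r ^ 2 : ℝ) • deriv f 0 := by
        rw [hcirc, smul_eq_mul, Complex.real_smul]
        push_cast
        linear_combination (-(2*(Real.pi:ℂ)*(r:ℂ)^2 * deriv f 0)) * Complex.I_sq


lemma aux_phiphi (hh : 0 < h) (z : ℂ) :
    gaussianPDFReal 0 h.toNNReal z.re * gaussianPDFReal 0 h.toNNReal z.im
      = (2 * Real.pi * h)⁻¹ * Real.exp (-(‖z‖) ^ 2 / (2 * h)) := by
  rw [aux_phi_eq hh, aux_phi_eq hh,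
    show (Real.sqrt (2 * Real.pi * h))⁻¹ * Real.exp (-z.re ^ 2 / (2 * h))
        * ((Real.sqrt (2 * Real.pi * h))⁻¹ * Real.exp (-z.im ^ 2 / (2 * h)))
      = (Real.sqrt (2 * Real.pi * h) * Real.sqrt (2 * Real.pi * h))⁻¹
        * (Real.exp (-z.re ^ 2 / (2 * h)) * Real.exp (-z.im ^ 2 / (2 * h))) from by
        rw [mul_inv]; ring,
    Real.mul_self_sqrt (by positivity), ← Real.exp_add]
  congr 1
  rw [Complex.sq_norm, Complex.normSq_apply]
  ring

lemma aux_K_int_prod (hh : 0 < h) (hf : ∀ z, AnalyticAt ℂ f z) (hC : 0 ≤ C) (ha : 0 ≤ a)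
    (hgrowth : ∀ w, ‖f w‖ ≤ C * Real.exp (a * ‖w‖)) :
    Integrable (fun p : ℝ × ℝ =>
        (gaussianPDFReal 0 h.toNNReal p.1 * gaussianPDFReal 0 h.toNNReal p.2)
          • ((starRingEnd ℂ) ((p.1 : ℂ) + (p.2 : ℂ) * Complex.I)
            * f ((p.1 : ℂ) + (p.2 : ℂ) * Complex.I))) (volume.prod volume) := by
  have hfc : Continuous f := continuous_iff_continuousAt.mpr fun z => (hf z).continuousAt
  have hb : (0:ℝ) ≤ a + 1 := by linarith
  refine (((aux_rho_int hh (a+1)).const_mul C).mul_prod (aux_rho_int hh (a+1))).mono' ?_ ?_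
  · have hgc : Continuous fun w : ℂ => (starRingEnd ℂ) w * f w := continuous_conj.mul hfc
    exact ((aux_phi_cont.comp continuous_fst).mul (aux_phi_cont.comp continuous_snd)).smul
      (hgc.comp (by fun_prop :
        Continuous fun p : ℝ × ℝ => (p.1 : ℂ) + (p.2 : ℂ) * Complex.I)) |>.aestronglyMeasurable
  · filter_upwards with p
    have hnn : 0 ≤ gaussianPDFReal 0 h.toNNReal p.1 * gaussianPDFReal 0 h.toNNReal p.2 :=
      mul_nonneg (gaussianPDFReal_nonneg _ _ _) (gaussianPDFReal_nonneg _ _ _)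
    rw [norm_smul, Real.norm_eq_abs, _root_.abs_of_nonneg hnn]
    calc (gaussianPDFReal 0 h.toNNReal p.1 * gaussianPDFReal 0 h.toNNReal p.2)
          * ‖(starRingEnd ℂ) ((p.1 : ℂ) + (p.2 : ℂ) * Complex.I)
            * f ((p.1 : ℂ) + (p.2 : ℂ) * Complex.I)‖
        ≤ (gaussianPDFReal 0 h.toNNReal p.1 * gaussianPDFReal 0 h.toNNReal p.2)
          * (C * Real.exp ((a+1) * (|p.1| + |p.2|))) := by
          refine mul_le_mul_of_nonneg_left ?_ hnn
          refine le_trans (aux_gg_growth hC ha hgrowth _) ?_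
          exact mul_le_mul_of_nonneg_left (Real.exp_le_exp.mpr
            (mul_le_mul_of_nonneg_left (aux_abs_le p) hb)) hC
      _ = C * (Real.exp ((a+1) * |p.1|) * gaussianPDFReal 0 h.toNNReal p.1)
          * (Real.exp ((a+1) * |p.2|) * gaussianPDFReal 0 h.toNNReal p.2) := by
          rw [show (a+1) * (|p.1| + |p.2|) = (a+1) * |p.1| + (a+1) * |p.2| from by ring,
            Real.exp_add]
          ring

lemma aux_polar_int (hh : 0 < h) (hf : ∀ z, AnalyticAt ℂ f z) (hC : 0 ≤ C) (ha : 0 ≤ a)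
    (hgrowth : ∀ w, ‖f w‖ ≤ C * Real.exp (a * ‖w‖)) :
    IntegrableOn (fun p : ℝ × ℝ =>
        p.1 • ((gaussianPDFReal 0 h.toNNReal (Complex.polarCoord.symm p).re
            * gaussianPDFReal 0 h.toNNReal (Complex.polarCoord.symm p).im)
          • ((starRingEnd ℂ) (Complex.polarCoord.symm p) * f (Complex.polarCoord.symm p))))
      (Ioi (0:ℝ) ×ˢ Ioo (-Real.pi) Real.pi) (volume.prod volume) := by
  have hfc : Continuous f := continuous_iff_continuousAt.mpr fun z => (hf z).continuousAt
  have hgc : Continuous fun w : ℂ => (starRingEnd ℂ) w * f w := continuous_conj.mul hfc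
  have hsymm : Continuous fun p : ℝ × ℝ => Complex.polarCoord.symm p := by
    have : (fun p : ℝ × ℝ => Complex.polarCoord.symm p)
        = fun p : ℝ × ℝ => (p.1 : ℂ) * (Real.cos p.2 + Real.sin p.2 * Complex.I) := by
      funext p; rw [Complex.polarCoord_symm_apply]
    rw [this]; fun_prop
  rw [IntegrableOn, ← Measure.prod_restrict]
  have hbint : Integrable (fun p : ℝ × ℝ =>
      (C * (2 * Real.pi * h)⁻¹ * Real.exp ((a+2) * |p.1| - p.1 ^ 2 / (2*h))) * 1)
      ((volume.restrict (Ioi (0:ℝ))).prod (volume.restrict (Ioo (-Real.pi) Real.pi))) := by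
    have h2 : Integrable (fun _ : ℝ => (1:ℝ)) (volume.restrict (Ioo (-Real.pi) Real.pi)) :=
      integrableOn_const measure_Ioo_lt_top.ne
    exact Integrable.mul_prod (((aux_int_exp_abs hh (a+2)).const_mul _).restrict) h2
  refine hbint.mono' ?_ ?_
  · exact (Continuous.aestronglyMeasurable (by
      exact continuous_fst.smul (((aux_phi_cont.comp (Complex.continuous_re.comp hsymm)).mul
        (aux_phi_cont.comp (Complex.continuous_im.comp hsymm))).smul (hgc.comp hsymm))))
  · filter_upwards with p
    set w := Complex.polarCoord.symm p with hwdef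
    have habs : ‖w‖ = |p.1| := Complex.norm_polarCoord_symm p
    have hphiphi := aux_phiphi hh (z := w)
    rw [norm_smul, norm_smul, Real.norm_eq_abs, Real.norm_eq_abs, hphiphi, habs,
      _root_.abs_of_nonneg (by positivity : (0:ℝ) ≤ (2 * Real.pi * h)⁻¹ * Real.exp (-|p.1| ^ 2 / (2 * h))),
      mul_one]
    have hgg : ‖(starRingEnd ℂ) w * f w‖ ≤ C * Real.exp ((a + 1) * |p.1|) := by
      rw [← habs]; exact aux_gg_growth hC ha hgrowth w
    have h1 : |p.1| ≤ Real.exp |p.1| := by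
      have := Real.add_one_le_exp |p.1|; linarith
    calc |p.1| * ((2 * Real.pi * h)⁻¹ * Real.exp (-|p.1| ^ 2 / (2 * h)) * ‖(starRingEnd ℂ) w * f w‖)
        ≤ Real.exp |p.1| * ((2 * Real.pi * h)⁻¹ * Real.exp (-|p.1| ^ 2 / (2 * h))
            * (C * Real.exp ((a + 1) * |p.1|))) := by
          refine mul_le_mul h1 (mul_le_mul_of_nonneg_left hgg (by positivity)) ?_ (Real.exp_nonneg _)
          positivity
      _ = C * (2 * Real.pi * h)⁻¹ * Real.exp ((a+2) * |p.1| - p.1 ^ 2 / (2*h)) := by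
          rw [show (a+2) * |p.1| - p.1 ^ 2 / (2*h)
              = |p.1| + (-|p.1| ^ 2 / (2 * h) + (a+1) * |p.1|) from by rw [← _root_.sq_abs p.1]; ring,
            Real.exp_add, Real.exp_add]
          ring


lemma aux_inner (hh : 0 < h) (hfd : Differentiable ℂ f) {r : ℝ} (hr : r ∈ Ioi (0:ℝ)) :
    ∫ θ in Ioo (-Real.pi) Real.pi,
        r • ((gaussianPDFReal 0 h.toNNReal (Complex.polarCoord.symm (r, θ)).re
            * gaussianPDFReal 0 h.toNNReal (Complex.polarCoord.symm (r, θ)).im)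
          • ((starRingEnd ℂ) (Complex.polarCoord.symm (r, θ)) * f (Complex.polarCoord.symm (r, θ))))
      = (r ^ 3 * Real.exp (-(2*h)⁻¹ * r ^ 2)) • ((h⁻¹ : ℝ) • deriv f 0) := by
  have hr' : (0:ℝ) < r := hr
  have hcm : ∀ θ : ℝ, Complex.polarCoord.symm (r, θ) = circleMap 0 r θ := by
    intro θ
    rw [Complex.polarCoord_symm_apply]
    simp [circleMap, Complex.exp_mul_I, Complex.ofReal_cos, Complex.ofReal_sin]
  simp_rw [hcm, aux_phiphi hh, norm_circleMap_zero, _root_.abs_of_pos hr', smul_smul]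
  rw [integral_smul, aux_circle hfd hr', smul_smul]
  congr 1
  rw [show -(2*h)⁻¹ * r ^ 2 = -r ^ 2 / (2*h) from by ring]
  field_simp

lemma aux_outer (hh : 0 < h) (c : ℂ) :
    ∫ r in Ioi (0:ℝ), (r ^ 3 * Real.exp (-(2*h)⁻¹ * r ^ 2)) • c = ((2*h^2 : ℝ)) • c := by
  rw [integral_smul_const]
  congr 1
  have hb : (0:ℝ) < (2*h)⁻¹ := by positivity
  have hgam := integral_rpow_mul_exp_neg_mul_rpow (by norm_num : (0:ℝ) < 2)
    (by norm_num : (-1:ℝ) < 3) hb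
  have hconv : ∀ x ∈ Ioi (0:ℝ),
      x ^ (3:ℕ) * Real.exp (-(2*h)⁻¹ * x ^ (2:ℕ)) = x ^ (3:ℝ) * Real.exp (-(2*h)⁻¹ * x ^ (2:ℝ)) := by
    intro x _
    rw [show (3:ℝ) = ((3:ℕ):ℝ) from by norm_num, show (2:ℝ) = ((2:ℕ):ℝ) from by norm_num,
      Real.rpow_natCast, Real.rpow_natCast]
  rw [setIntegral_congr_fun measurableSet_Ioi hconv, hgam,
    show (-((3:ℝ)+1)/2) = ((-2:ℤ):ℝ) from by norm_num,
    show (((3:ℝ)+1)/2) = 2 from by norm_num, Real.rpow_intCast,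
    show (2:ℝ) = ((1:ℕ):ℝ)+1 from by norm_num, Real.Gamma_nat_eq_factorial]
  simp only [Nat.factorial_one, Nat.cast_one]
  rw [zpow_neg, zpow_two]
  have h0 : h ≠ 0 := ne_of_gt hh
  field_simp


end main

/-- First-moment identity against holomorphic functions:
for `f : ℂ → ℂ` entire of exponential growth,
`∫ conj(w)·f(w) dγ_h(w) = 2h·f′(0)`. -/
theorem gaussian_conj_moment_holomorphic
    (h : ℝ) (hh : 0 < h) (f : ℂ → ℂ) (hf : ∀ z, AnalyticAt ℂ f z)
    (C a : ℝ) (hC : 0 ≤ C) (ha : 0 ≤ a)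
    (hgrowth : ∀ w, ‖f w‖ ≤ C * Real.exp (a * ‖w‖)) :
    ∫ w, (starRingEnd ℂ) w * f w ∂(gaussC h) = 2 * (h : ℂ) * deriv f 0 := by
  have hfc : Continuous f := continuous_iff_continuousAt.mpr fun z => (hf z).continuousAt
  have hfd : Differentiable ℂ f := fun z => (hf z).differentiableAt
  have hgc : Continuous fun w : ℂ => (starRingEnd ℂ) w * f w := continuous_conj.mul hfc
  calc ∫ w, (starRingEnd ℂ) w * f w ∂(gaussC h)
      = ∫ z : ℂ, (gaussianPDFReal 0 h.toNNReal z.re * gaussianPDFReal 0 h.toNNReal z.im)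
          • ((starRingEnd ℂ) z * f z) :=
        aux_transfer hh _ hgc (aux_gg_int_prod hh hf hC ha hgrowth)
          (aux_K_int_prod hh hf hC ha hgrowth)
    _ = ∫ p in polarCoord.target,
          p.1 • ((gaussianPDFReal 0 h.toNNReal (Complex.polarCoord.symm p).re
            * gaussianPDFReal 0 h.toNNReal (Complex.polarCoord.symm p).im)
          • ((starRingEnd ℂ) (Complex.polarCoord.symm p) * f (Complex.polarCoord.symm p))) :=
        (Complex.integral_comp_polarCoord_symm fun z =>
          (gaussianPDFReal 0 h.toNNReal z.re * gaussianPDFReal 0 h.toNNReal z.im)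
            • ((starRingEnd ℂ) z * f z)).symm
    _ = ∫ r in Ioi (0:ℝ), ∫ θ in Ioo (-Real.pi) Real.pi,
          (r, θ).1 • ((gaussianPDFReal 0 h.toNNReal (Complex.polarCoord.symm (r, θ)).re
            * gaussianPDFReal 0 h.toNNReal (Complex.polarCoord.symm (r, θ)).im)
          • ((starRingEnd ℂ) (Complex.polarCoord.symm (r, θ))
            * f (Complex.polarCoord.symm (r, θ)))) := by
        rw [show polarCoord.target = Ioi (0:ℝ) ×ˢ Ioo (-Real.pi) Real.pi from rfl,
          Measure.volume_eq_prod, setIntegral_prod _ (aux_polar_int hh hf hC ha hgrowth)]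
    _ = ∫ r in Ioi (0:ℝ), (r ^ 3 * Real.exp (-(2*h)⁻¹ * r ^ 2)) • ((h⁻¹ : ℝ) • deriv f 0) :=
        setIntegral_congr_fun measurableSet_Ioi fun r hr => aux_inner hh hfd hr
    _ = ((2*h^2 : ℝ)) • ((h⁻¹ : ℝ) • deriv f 0) := aux_outer hh _
    _ = 2 * (h : ℂ) * deriv f 0 := by
        rw [smul_smul, Complex.real_smul]
        push_cast
        have h0 : (h:ℂ) ≠ 0 := by
          simp only [ne_eq, Complex.ofReal_eq_zero]; exact ne_of_gt hh
        field_simp
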